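/- Let i ∈ ℂ be a primitive fourth root of unity (i² = −1). Let V be a 4-dimensional ℂ-vector space and let f be an endomorphism of V whose matrix in some basis of V is diag(J(i,2), J(−i,2)). Then there is a basis of the 6-dimensional space ⋀²V in which the induced endomorphism ⋀²f has matrix diag(J(1,3), J(1,1), J(−1,1), J(−1,1)). -/

import Mathlib

/-- The `n × n` Jordan block with eigenvalue `lam`: every diagonal entry is `lam` and every
entry directly above the diagonal is `1`. -/
def jordanBlock (lam : ℂ) (n : ℕ) : Matrix (Fin n) (Fin n) ℂ :=
  Matrix.of fun i j : Fin n =>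
    if (j : ℕ) = (i : ℕ) then lam else if (j : ℕ) = (i : ℕ) + 1 then 1 else 0

/-- The wedge `v ∧ w` as an element of the second exterior power `⋀[ℂ]^2 V`. -/
def wedge {V : Type*} [AddCommGroup V] [Module ℂ V] (v w : V) : ⋀[ℂ]^2 V :=
  ⟨ExteriorAlgebra.ι ℂ v * ExteriorAlgebra.ι ℂ w, by
    show _ ∈ LinearMap.range (ExteriorAlgebra.ι ℂ (M := V)) ^ 2
    rw [pow_two]
    exact Submodule.mul_mem_mul (LinearMap.mem_range_self _ v) (LinearMap.mem_range_self _ w)⟩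

namespace ExtAux

variable {V : Type*} [AddCommGroup V] [Module ℂ V]

open ExteriorAlgebra

@[simp] lemma wedge_val (v w : V) :
    (wedge v w : ExteriorAlgebra ℂ V) = ι ℂ v * ι ℂ w := rfl

lemma wedge_add_left (v v' w : V) : wedge (v + v') w = wedge v w + wedge v' w :=
  Subtype.ext <| by simp [add_mul]

lemma wedge_add_right (v w w' : V) : wedge v (w + w') = wedge v w + wedge v w' :=
  Subtype.ext <| by simp [mul_add]

lemma wedge_smul_left (a : ℂ) (v w : V) : wedge (a • v) w = a • wedge v w :=
  Subtype.ext <| by simp [smul_mul_assoc]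

lemma wedge_smul_right (a : ℂ) (v w : V) : wedge v (a • w) = a • wedge v w :=
  Subtype.ext <| by simp [mul_smul_comm]

@[simp] lemma wedge_self (v : V) : wedge v v = 0 :=
  Subtype.ext <| by simp [ι_sq_zero]

lemma wedge_antisymm (v w : V) : wedge w v = - wedge v w :=
  Subtype.ext <| by
    simp only [wedge_val, Submodule.coe_neg]
    rw [eq_neg_iff_add_eq_zero]
    exact ι_add_mul_swap w v

/-- `wedge` as a bilinear map. -/
noncomputable def wedgeBil : V →ₗ[ℂ] V →ₗ[ℂ] ⋀[ℂ]^2 V :=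
  LinearMap.mk₂ ℂ wedge wedge_add_left wedge_smul_left wedge_add_right wedge_smul_right

@[simp] lemma wedgeBil_apply (v w : V) : wedgeBil v w = wedge v w := rfl

lemma ιMulti_two (v : Fin 2 → V) : ιMulti ℂ 2 v = ι ℂ (v 0) * ι ℂ (v 1) := by
  simp [ιMulti_apply, List.ofFn_succ, Matrix.vecTail, Function.comp]

/-- Alternating bilinear form built from two functionals. -/
noncomputable def pairForm (p q : V →ₗ[ℂ] ℂ) : V [⋀^Fin 2]→ₗ[ℂ] ℂ :=
  (Matrix.detRowAlternating (R := ℂ) (n := Fin 2)).compLinearMap (LinearMap.pi ![p, q])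

lemma pairForm_apply (p q : V →ₗ[ℂ] ℂ) (v w : V) :
    pairForm p q ![v, w] = p v * q w - q v * p w := by
  have hdet : ∀ M : Fin 2 → Fin 2 → ℂ,
      Matrix.detRowAlternating M = Matrix.det (Matrix.of M) := fun _ => rfl
  rw [pairForm, AlternatingMap.compLinearMap_apply, hdet, Matrix.det_fin_two]
  simp [Matrix.of_apply, LinearMap.pi_apply]

/-- The linear functional on `⋀²V` induced by an alternating bilinear form. -/
noncomputable def extFunctional (p q : V →ₗ[ℂ] ℂ) : (⋀[ℂ]^2 V) →ₗ[ℂ] ℂ :=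
  (ExteriorAlgebra.liftAlternating
    (fun n => match n with | 2 => pairForm p q | _ => 0)).comp (Submodule.subtype _)

lemma extFunctional_wedge (p q : V →ₗ[ℂ] ℂ) (v w : V) :
    extFunctional p q (wedge v w) = p v * q w - q v * p w := by
  have h : (wedge v w : ExteriorAlgebra ℂ V) = ιMulti ℂ 2 ![v, w] := (ιMulti_two ![v, w]).symm
  rw [extFunctional, LinearMap.comp_apply, Submodule.coe_subtype, h,
    liftAlternating_apply_ιMulti]
  exact pairForm_apply p q v w

end ExtAux

set_option maxHeartbeats 1000000 in
open ExtAux ExteriorAlgebra in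
/-- Let `i ∈ ℂ` be a primitive fourth root of unity (`i² = −1`). If the matrix of the endomorphism `f` of the 4-dimensional ℂ-vector space `V` in some basis is diag(J(i,2), J(−i,2)), then in some basis of the 6-dimensional space ⋀²V the induced endomorphism ⋀²f (characterized by `v ∧ w ↦ f v ∧ f w`) has matrix diag(J(1,3), J(1,1), J(−1,1), J(−1,1)). -/
theorem exterior_square_jordan_Ji2_Jmi2 (V : Type*) [AddCommGroup V] [Module ℂ V]
    (hdim : Module.finrank ℂ V = 4)
    (i : ℂ) (hi : i ^ 2 = -1)
    (f : V →ₗ[ℂ] V)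
    (B : Module.Basis (Fin 2 ⊕ Fin 2) ℂ V)
    (hB : LinearMap.toMatrix B B f = Matrix.fromBlocks (jordanBlock i 2) 0 0 (jordanBlock (-i) 2))
    (g : (⋀[ℂ]^2 V) →ₗ[ℂ] (⋀[ℂ]^2 V))
    (hg : ∀ v w : V, g (wedge v w) = wedge (f v) (f w)) :
    ∃ C : Module.Basis (Fin 3 ⊕ (Fin 1 ⊕ (Fin 1 ⊕ Fin 1))) ℂ (⋀[ℂ]^2 V),
      LinearMap.toMatrix C C g = Matrix.fromBlocks (jordanBlock 1 3) 0 0 (Matrix.fromBlocks (jordanBlock 1 1) 0 0 (Matrix.fromBlocks (jordanBlock (-1) 1) 0 0 (jordanBlock (-1) 1))) := by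
  classical
  have hii : i * i = -1 := by rw [← sq]; exact hi
  have hi0 : i ≠ 0 := by rintro rfl; norm_num at hi
  -- action of f on the basis
  have hf : ∀ j, f (B j) =
      ∑ k, (Matrix.fromBlocks (jordanBlock i 2) 0 0 (jordanBlock (-i) 2)) k j • B k := by
    intro j
    have hfe : f = Matrix.toLin B B
        (Matrix.fromBlocks (jordanBlock i 2) 0 0 (jordanBlock (-i) 2)) := by
      rw [← hB, Matrix.toLin_toMatrix]
    rw [hfe, Matrix.toLin_self]
  have hf1 : f (B (Sum.inl 0)) = i • B (Sum.inl 0) := by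
    rw [hf]
    simp [Fintype.sum_sum_type, Fin.sum_univ_two, jordanBlock, Matrix.fromBlocks]
  have hf2 : f (B (Sum.inl 1)) = B (Sum.inl 0) + i • B (Sum.inl 1) := by
    rw [hf]
    simp [Fintype.sum_sum_type, Fin.sum_univ_two, jordanBlock, Matrix.fromBlocks]
  have hf3 : f (B (Sum.inr 0)) = (-i) • B (Sum.inr 0) := by
    rw [hf]
    simp [Fintype.sum_sum_type, Fin.sum_univ_two, jordanBlock, Matrix.fromBlocks]
  have hf4 : f (B (Sum.inr 1)) = B (Sum.inr 0) + (-i) • B (Sum.inr 1) := by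
    rw [hf]
    simp [Fintype.sum_sum_type, Fin.sum_univ_two, jordanBlock, Matrix.fromBlocks]
  set e1 := B (Sum.inl 0) with he1
  set e2 := B (Sum.inl 1) with he2
  set e3 := B (Sum.inr 0) with he3
  set e4 := B (Sum.inr 1) with he4
  -- the candidate basis family
  set cv : (Fin 3 ⊕ (Fin 1 ⊕ (Fin 1 ⊕ Fin 1))) → ⋀[ℂ]^2 V :=
    Sum.elim
      ![(2:ℂ) • wedge e1 e3,
        wedge e1 e3 - i • wedge e1 e4 + i • wedge e2 e3,
        wedge e2 e4]
      (Sum.elim ![wedge e1 e4 + wedge e2 e3]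
        (Sum.elim ![wedge e1 e2] ![wedge e3 e4])) with hcv
  -- values of the separating functionals on basis wedges
  have hwfun : ∀ a b a' b' : Fin 2 ⊕ Fin 2,
      extFunctional (B.coord a) (B.coord b) (wedge (B a') (B b'))
        = (if a' = a then 1 else 0) * (if b' = b then 1 else 0)
          - (if a' = b then 1 else 0) * (if b' = a then 1 else 0) := by
    intro a b a' b'
    rw [extFunctional_wedge]
    simp [Module.Basis.coord_apply, Module.Basis.repr_self, Finsupp.single_apply, eq_comm]
  -- linear independence
  have hLI : LinearIndependent ℂ cv := by
    rw [Fintype.linearIndependent_iff]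
    intro t ht
    have happ : ∀ a b : Fin 2 ⊕ Fin 2,
        ∑ k, t k • extFunctional (B.coord a) (B.coord b) (cv k) = 0 := by
      intro a b
      have h := congrArg (extFunctional (B.coord a) (B.coord b)) ht
      rw [map_sum, map_zero] at h
      simpa [map_smul] using h
    have h13 := happ (Sum.inl 0) (Sum.inr 0)
    have h14 := happ (Sum.inl 0) (Sum.inr 1)
    have h23 := happ (Sum.inl 1) (Sum.inr 0)
    have h24 := happ (Sum.inl 1) (Sum.inr 1)
    have h12 := happ (Sum.inl 0) (Sum.inl 1)
    have h34 := happ (Sum.inr 0) (Sum.inr 1)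
    simp only [hcv, Fintype.sum_sum_type, Fin.sum_univ_three, Fin.sum_univ_one,
      Sum.elim_inl, Sum.elim_inr, Matrix.cons_val_zero, Matrix.cons_val_one,
      Matrix.head_cons, Matrix.cons_val_fin_one, map_add, map_sub, map_smul,
      he1, he2, he3, he4, smul_eq_mul] at h13 h14 h23 h24 h12 h34
    simp [hwfun] at h13 h14 h23 h24 h12 h34
    have ht1 : t (Sum.inl 1) = 0 := by
      have h2 : i * t (Sum.inl 1) = 0 := by linear_combination (h23 - h14) / 2
      exact (mul_eq_zero.mp h2).resolve_left hi0
    intro k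
    rcases k with k | k | k | k
    · fin_cases k
      · show t (Sum.inl 0) = 0
        linear_combination (h13 - ht1) / 2
      · show t (Sum.inl 1) = 0
        exact ht1
      · show t (Sum.inl 2) = 0
        linear_combination h24
    · fin_cases k
      show t (Sum.inr (Sum.inl 0)) = 0
      linear_combination h14 + i * ht1
    · fin_cases k
      show t (Sum.inr (Sum.inr (Sum.inl 0))) = 0
      linear_combination h12
    · fin_cases k
      show t (Sum.inr (Sum.inr (Sum.inr 0))) = 0
      linear_combination h34
  -- spanning
  set P := Submodule.span ℂ (Set.range cv) with hP
  have memP : ∀ k, cv k ∈ P := fun k => Submodule.subset_span ⟨k, rfl⟩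
  have h12m : wedge e1 e2 ∈ P := memP (Sum.inr (Sum.inr (Sum.inl 0)))
  have h34m : wedge e3 e4 ∈ P := memP (Sum.inr (Sum.inr (Sum.inr 0)))
  have h24m : wedge e2 e4 ∈ P := memP (Sum.inl 2)
  have h13m : wedge e1 e3 ∈ P := by
    have h := P.smul_mem (2⁻¹ : ℂ) (memP (Sum.inl 0))
    rw [show cv (Sum.inl 0) = (2:ℂ) • wedge e1 e3 from rfl, smul_smul] at h
    norm_num at h
    exact h
  have h14m : wedge e1 e4 ∈ P := by
    have h := P.add_mem (P.sub_mem
        (P.smul_mem (2⁻¹ * i) (memP (Sum.inl 1)))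
        (P.smul_mem (4⁻¹ * i) (memP (Sum.inl 0))))
      (P.smul_mem (2⁻¹ : ℂ) (memP (Sum.inr (Sum.inl 0))))
    have e : (2⁻¹ * i) • cv (Sum.inl 1) - (4⁻¹ * i) • cv (Sum.inl 0)
        + (2⁻¹ : ℂ) • cv (Sum.inr (Sum.inl 0)) = wedge e1 e4 := by
      show (2⁻¹ * i) • (wedge e1 e3 - i • wedge e1 e4 + i • wedge e2 e3)
          - (4⁻¹ * i) • ((2:ℂ) • wedge e1 e3)
          + (2⁻¹ : ℂ) • (wedge e1 e4 + wedge e2 e3) = wedge e1 e4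
      match_scalars <;>
        first
          | ring1
          | linear_combination hii
          | linear_combination -hii
          | linear_combination (2⁻¹ : ℂ) * hii
          | linear_combination (-2⁻¹ : ℂ) * hii
          | linear_combination (4⁻¹ : ℂ) * hii
          | linear_combination (-4⁻¹ : ℂ) * hii
          | linear_combination (2 : ℂ) * hii
          | linear_combination (-2 : ℂ) * hii
    rw [e] at h
    exact h
  have h23m : wedge e2 e3 ∈ P := by
    have h := P.add_mem (P.add_mem
        (P.smul_mem (-(2⁻¹ * i)) (memP (Sum.inl 1)))
        (P.smul_mem (4⁻¹ * i) (memP (Sum.inl 0))))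
      (P.smul_mem (2⁻¹ : ℂ) (memP (Sum.inr (Sum.inl 0))))
    have e : (-(2⁻¹ * i)) • cv (Sum.inl 1) + (4⁻¹ * i) • cv (Sum.inl 0)
        + (2⁻¹ : ℂ) • cv (Sum.inr (Sum.inl 0)) = wedge e2 e3 := by
      show (-(2⁻¹ * i)) • (wedge e1 e3 - i • wedge e1 e4 + i • wedge e2 e3)
          + (4⁻¹ * i) • ((2:ℂ) • wedge e1 e3)
          + (2⁻¹ : ℂ) • (wedge e1 e4 + wedge e2 e3) = wedge e2 e3
      match_scalars <;>
        first
          | ring1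
          | linear_combination hii
          | linear_combination -hii
          | linear_combination (2⁻¹ : ℂ) * hii
          | linear_combination (-2⁻¹ : ℂ) * hii
          | linear_combination (4⁻¹ : ℂ) * hii
          | linear_combination (-4⁻¹ : ℂ) * hii
          | linear_combination (2 : ℂ) * hii
          | linear_combination (-2 : ℂ) * hii
    rw [e] at h
    exact h
  have hpairm : ∀ a b : Fin 2 ⊕ Fin 2, wedge (B a) (B b) ∈ P := by
    intro a b
    rcases a with a | a <;> rcases b with b | b <;> fin_cases a <;> fin_cases b
    · show wedge e1 e1 ∈ P
      rw [wedge_self]; exact P.zero_mem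
    · exact h12m
    · show wedge e2 e1 ∈ P
      rw [wedge_antisymm]; exact P.neg_mem h12m
    · show wedge e2 e2 ∈ P
      rw [wedge_self]; exact P.zero_mem
    · exact h13m
    · exact h14m
    · exact h23m
    · exact h24m
    · show wedge e3 e1 ∈ P
      rw [wedge_antisymm]; exact P.neg_mem h13m
    · show wedge e3 e2 ∈ P
      rw [wedge_antisymm]; exact P.neg_mem h23m
    · show wedge e4 e1 ∈ P
      rw [wedge_antisymm]; exact P.neg_mem h14m
    · show wedge e4 e2 ∈ P
      rw [wedge_antisymm]; exact P.neg_mem h24m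
    · show wedge e3 e3 ∈ P
      rw [wedge_self]; exact P.zero_mem
    · exact h34m
    · show wedge e4 e3 ∈ P
      rw [wedge_antisymm]; exact P.neg_mem h34m
    · show wedge e4 e4 ∈ P
      rw [wedge_self]; exact P.zero_mem
  have hwP : ∀ v w : V, wedge v w ∈ P := by
    intro v w
    rw [show wedge v w = wedgeBil v w from rfl, ← B.sum_repr v, ← B.sum_repr w]
    simp only [map_sum, map_smul, LinearMap.sum_apply, LinearMap.smul_apply]
    exact Submodule.sum_mem _ fun a _ => Submodule.smul_mem _ _
      (Submodule.sum_mem _ fun b _ => Submodule.smul_mem _ _ (hpairm b a))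
  have hsp : ⊤ ≤ Submodule.span ℂ (Set.range cv) := by
    have hmap : (⋀[ℂ]^2 V : Submodule ℂ (ExteriorAlgebra ℂ V)) ≤
        Submodule.map (Submodule.subtype _) P := by
      refine le_trans (le_of_eq (ιMulti_span_fixedDegree (R := ℂ) (M := V) 2).symm)
        (Submodule.span_le.mpr ?_)
      rintro _ ⟨v, rfl⟩
      exact ⟨wedge (v 0) (v 1), hwP _ _, (ιMulti_two v).symm⟩
    rintro x -
    obtain ⟨y, hyP, hyx⟩ := hmap x.2
    have hyx' : y = x := Subtype.ext hyx
    rwa [← hyx']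
  -- the basis and the matrix computation
  refine ⟨Module.Basis.mk hLI hsp, ?_⟩
  set C : Module.Basis (Fin 3 ⊕ (Fin 1 ⊕ (Fin 1 ⊕ Fin 1))) ℂ (⋀[ℂ]^2 V) := Module.Basis.mk hLI hsp with hCdef
  have hC : ∀ k, C k = cv k := fun k => Module.Basis.mk_apply hLI hsp k
  have hg13 : g (wedge e1 e3) = wedge e1 e3 := by
    rw [hg, hf1, hf3]
    simp only [wedge_smul_left, wedge_smul_right, smul_smul]
    match_scalars
    linear_combination -hii
  have hg14 : g (wedge e1 e4) = i • wedge e1 e3 + wedge e1 e4 := by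
    rw [hg, hf1, hf4]
    simp only [wedge_add_right, wedge_smul_left, wedge_smul_right, smul_smul]
    match_scalars <;> first | ring1 | linear_combination hii | linear_combination -hii
  have hg23 : g (wedge e2 e3) = (-i) • wedge e1 e3 + wedge e2 e3 := by
    rw [hg, hf2, hf3]
    simp only [wedge_add_left, wedge_smul_left, wedge_smul_right, smul_smul]
    match_scalars <;> first | ring1 | linear_combination hii | linear_combination -hii
  have hg24 : g (wedge e2 e4) = wedge e1 e3 - i • wedge e1 e4 + i • wedge e2 e3
      + wedge e2 e4 := by
    rw [hg, hf2, hf4]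
    simp only [wedge_add_left, wedge_add_right, wedge_smul_left, wedge_smul_right, smul_smul]
    match_scalars <;> first | ring1 | linear_combination hii | linear_combination -hii
  have hg12 : g (wedge e1 e2) = -wedge e1 e2 := by
    rw [hg, hf1, hf2]
    simp only [wedge_add_right, wedge_smul_left, wedge_smul_right, wedge_self, smul_smul,
      smul_zero, zero_add, add_zero]
    match_scalars <;> first | ring1 | linear_combination hii | linear_combination -hii
  have hg34 : g (wedge e3 e4) = -wedge e3 e4 := by
    rw [hg, hf3, hf4]
    simp only [wedge_add_right, wedge_smul_left, wedge_smul_right, wedge_self, smul_smul,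
      smul_zero, zero_add, add_zero]
    match_scalars <;> first | ring1 | linear_combination hii | linear_combination -hii
  have hgC : g = Matrix.toLin C C (Matrix.fromBlocks (jordanBlock 1 3) 0 0
      (Matrix.fromBlocks (jordanBlock 1 1) 0 0
        (Matrix.fromBlocks (jordanBlock (-1) 1) 0 0 (jordanBlock (-1) 1)))) := by
    refine Module.Basis.ext C fun k => ?_
    rw [Matrix.toLin_self]
    simp only [hC]
    rcases k with k | k | k | k <;> fin_cases k <;>
      simp [hcv, Fintype.sum_sum_type, Fin.sum_univ_three, Fin.sum_univ_one,
        jordanBlock, Matrix.fromBlocks, map_add, map_sub, map_smul,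
        hg13, hg14, hg23, hg24, hg12, hg34] <;>
      match_scalars <;>
      first
        | ring1
        | linear_combination hii
        | linear_combination -hii
        | linear_combination (2⁻¹ : ℂ) * hii
        | linear_combination (-2⁻¹ : ℂ) * hii
        | linear_combination (2 : ℂ) * hii
        | linear_combination (-2 : ℂ) * hii
  rw [hgC, LinearMap.toMatrix_toLin]
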